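/- Proposition 4.6 (the contractivity LMI implies strict operator-norm contraction of the whitened cross-covariance). Let Σ_cov and Σ_cr be d×d real matrices with Σ_cov symmetric positive definite, and suppose the 2d×2d block matrix [[Σ_cov, Σ_cr],[Σ_crᵀ, Σ_cov]] is positive semidefinite. Then for every γ ∈ (0,1), ‖γ·Σ_cov^{−1/2}·Σ_cr·Σ_cov^{−1/2}‖ < 1. -/

import Mathlib

open scoped Matrix.Norms.L2Operator
open Matrix

/-- The square root of a positive semidefinite matrix, as `Matrix.PosSemidef.sqrt` was defined
in Mathlib (December 2024); it has since been removed in favour of `CFC.sqrt`. -/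
noncomputable def Matrix.PosSemidef.sqrt {n : Type*} [Fintype n] [DecidableEq n] {𝕜 : Type*}
    [RCLike 𝕜] [PartialOrder 𝕜] {A : Matrix n n 𝕜} (hA : A.PosSemidef) : Matrix n n 𝕜 :=
  (hA.1.eigenvectorUnitary : Matrix n n 𝕜) * diagonal ((↑) ∘ (Real.sqrt ∘ hA.1.eigenvalues)) *
    (star (hA.1.eigenvectorUnitary : Matrix n n 𝕜))

lemma Matrix.PosSemidef.posSemidef_sqrt {n : Type*} [Fintype n] [DecidableEq n]
    {A : Matrix n n ℝ} (hA : A.PosSemidef) : hA.sqrt.PosSemidef := by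
  unfold Matrix.PosSemidef.sqrt
  simpa [Matrix.star_eq_conjTranspose, Function.comp_def] using
    (PosSemidef.diagonal (d := fun i => Real.sqrt (hA.1.eigenvalues i))
      (fun i => Real.sqrt_nonneg _)).mul_mul_conjTranspose_same
      (hA.1.eigenvectorUnitary : Matrix n n ℝ)

lemma Matrix.PosSemidef.sqrt_mul_self {n : Type*} [Fintype n] [DecidableEq n]
    {A : Matrix n n ℝ} (hA : A.PosSemidef) : hA.sqrt * hA.sqrt = A := by
  unfold Matrix.PosSemidef.sqrt
  have hU : star (hA.1.eigenvectorUnitary : Matrix n n ℝ) * (hA.1.eigenvectorUnitary : Matrix n n ℝ)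
      = 1 := Unitary.star_mul_self_of_mem hA.1.eigenvectorUnitary.prop
  have hs := hA.1.spectral_theorem
  rw [Unitary.conjStarAlgAut_apply] at hs
  conv_rhs => rw [hs]
  simp only [mul_assoc]
  rw [← mul_assoc (star (hA.1.eigenvectorUnitary : Matrix n n ℝ)), hU, Matrix.one_mul,
    ← mul_assoc (diagonal _), diagonal_mul_diagonal]
  congr 3
  funext i
  simp [Real.mul_self_sqrt (hA.eigenvalues_nonneg i)]


lemma contract_of_block {d : ℕ} {M : Matrix (Fin d) (Fin d) ℝ}
    (h : (Matrix.fromBlocks 1 M Mᵀ 1).PosSemidef) : ‖M‖ ≤ 1 := by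
  have key : ∀ y : Fin d → ℝ, (M *ᵥ y) ⬝ᵥ (M *ᵥ y) ≤ y ⬝ᵥ y := by
    intro y
    have h2 := h.dotProduct_mulVec_nonneg (Sum.elim (M *ᵥ y) (-y))
    simp only [star_trivial, fromBlocks_mulVec, one_mulVec, mulVec_neg,
      sumElim_dotProduct_sumElim, neg_dotProduct, dotProduct_add, dotProduct_neg,
      add_neg_cancel, dotProduct_zero, mulVec_transpose, Sum.elim_comp_inl, Sum.elim_comp_inr] at h2
    have h3 : y ⬝ᵥ (M *ᵥ y) ᵥ* M = (M *ᵥ y) ⬝ᵥ (M *ᵥ y) := by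
      rw [dotProduct_comm, ← Matrix.dotProduct_mulVec]
    linarith [h2, h3]
  rw [Matrix.l2_opNorm_def]
  apply ContinuousLinearMap.opNorm_le_bound _ zero_le_one
  intro x
  rw [one_mul]
  simp only [LinearEquiv.trans_apply, LinearMap.coe_toContinuousLinearMap',
    Matrix.toEuclideanLin_apply]
  rw [EuclideanSpace.norm_eq, EuclideanSpace.norm_eq]
  apply Real.sqrt_le_sqrt
  have := key ((WithLp.equiv 2 _) x)
  simpa [dotProduct, Real.norm_eq_abs, sq_abs, pow_two, WithLp.equiv] using this


/-- Proposition 4.6: the contractivity LMI of Kolter (2011) — positive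
semidefiniteness of the block matrix `[[Σ_cov, Σ_cr],[Σ_crᵀ, Σ_cov]]` — implies
that the whitened cross-covariance `γ·Σ_cov^{-1/2}·Σ_cr·Σ_cov^{-1/2}` has
operator norm strictly less than 1 for every `γ ∈ (0,1)`. -/
theorem stmt_13 (d : ℕ) (Scov Scr : Matrix (Fin d) (Fin d) ℝ)
    (hcov : Scov.PosDef)
    (hblock : (Matrix.fromBlocks Scov Scr Scrᵀ Scov).PosSemidef)
    (γ : ℝ) (hγ0 : 0 < γ) (hγ1 : γ < 1) :
    ‖γ • (hcov.posSemidef.sqrt⁻¹ * Scr * hcov.posSemidef.sqrt⁻¹)‖ < 1 := by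
  set S := hcov.posSemidef.sqrt with hSdef
  set Si := S⁻¹ with hSidef
  have hS : S.PosSemidef := hcov.posSemidef.posSemidef_sqrt
  have hSH : Sᴴ = S := hS.1
  have hmul : S * S = Scov := hcov.posSemidef.sqrt_mul_self
  have hdet : IsUnit S.det := by
    have : S.det * S.det = Scov.det := by rw [← Matrix.det_mul, hmul]
    have hpos := hcov.det_pos
    refine isUnit_iff_ne_zero.mpr fun h0 => ?_
    rw [h0, mul_zero] at this
    exact absurd this.symm (ne_of_gt hpos)
  have hSiS : Si * S = 1 := Matrix.nonsing_inv_mul S hdet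
  have hSSi : S * Si = 1 := Matrix.mul_nonsing_inv S hdet
  have hSiH : Siᴴ = Si := by rw [hSidef, Matrix.conjTranspose_nonsing_inv, hSH]
  have hone : Si * Scov * Si = 1 := by
    rw [← hmul]
    calc Si * (S * S) * Si = (Si * S) * (S * Si) := by noncomm_ring
      _ = 1 := by rw [hSiS, hSSi, Matrix.one_mul]
  set M := Si * Scr * Si with hM
  have hMT : Mᵀ = Si * Scrᵀ * Si := by
    rw [hM, Matrix.transpose_mul, Matrix.transpose_mul, ← Matrix.mul_assoc]
    have : Siᵀ = Si := by rw [← Matrix.conjTranspose_eq_transpose_of_trivial, hSiH]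
    rw [this]
  have hPSD : (Matrix.fromBlocks 1 M Mᵀ 1).PosSemidef := by
    have h1 := hblock.conjTranspose_mul_mul_same (Matrix.fromBlocks Si 0 0 Si)
    have h2 : (Matrix.fromBlocks Si 0 0 Si)ᴴ * Matrix.fromBlocks Scov Scr Scrᵀ Scov *
        Matrix.fromBlocks Si 0 0 Si = Matrix.fromBlocks 1 M Mᵀ 1 := by
      rw [Matrix.fromBlocks_conjTranspose, hSiH, Matrix.conjTranspose_zero,
        Matrix.fromBlocks_multiply, Matrix.fromBlocks_multiply]
      simp [Matrix.mul_assoc, hone, hMT, hM, ← Matrix.mul_assoc,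
          show Siᵀ = Si from by rw [← Matrix.conjTranspose_eq_transpose_of_trivial, hSiH]]
    rwa [h2] at h1
  have hle : ‖M‖ ≤ 1 := contract_of_block hPSD
  calc ‖γ • M‖ = ‖γ‖ * ‖M‖ := norm_smul γ M
    _ ≤ γ * 1 := by
        rw [Real.norm_eq_abs, abs_of_pos hγ0]
        exact mul_le_mul_of_nonneg_left hle hγ0.le
    _ < 1 := by linarith
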